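/- arXiv:2512.23425 — 3 statements merged into one kernel-verified Lean document; each statement's English description precedes it below -/
import Mathlib

section
/- Let (U_1,…,U_n) be a trajectory of a stationary and ergodic Z-valued process {Z_t = (X_t,Y_t) : t∈ℤ} satisfying (A4). Let G be a set of real-valued measurable functions on Z such that, for some constants C_1, C_2 ≥ 0, |g(U_1) − E[g(U_1)]| ≤ C_1 almost surely and E[g(U_1)²] ≤ C_2 E[g(U_1)] for every g ∈ G. Then there exists a constant c > 0, independent of n, ε and u, such that for all ε > 0 and 0 < u ≤ 1 and all n ≥ n_0: P{ sup_{g∈G} (E[g(U_1)] − (1/n)Σ_{i=1}^n g(U_i)) / √(E[g(U_1)] + ε) ≥ 4u√ε } ≤ c · N(G, uε) · exp(−u²ε φ(n)/(c_γ C_2 + c_A C_1)). -/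
open MeasureTheory Real
open scoped BigOperators Classical ENNReal NNReal

noncomputable section

/-! ### Deep (feedforward) neural networks -/

/-- A feedforward neural network with input dimension `d`:
`depth` hidden layers, width vector `width`, weight matrices `weight j` and
shift vectors `bias j` (so that `A_{j+1}(x) = weight j *ᵥ x + bias j`). -/
structure DNN (d : ℕ) where
  depth : ℕ
  width : ℕ → ℕ
  weight : (j : ℕ) → Matrix (Fin (width (j + 1))) (Fin (width j)) ℝ
  bias : (j : ℕ) → Fin (width (j + 1)) → ℝ
  width_zero : width 0 = d
  width_last : width (depth + 1) = 1

namespace DNN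

variable {d : ℕ}

/-- Output of the `j`-th hidden layer: `σ_j ∘ A_j ∘ ⋯ ∘ σ_1 ∘ A_1`. -/
def hidden (σ : ℝ → ℝ) (net : DNN d) :
    (j : ℕ) → (Fin (net.width 0) → ℝ) → Fin (net.width j) → ℝ
  | 0, x => x
  | j + 1, x => fun i => σ (((net.weight j).mulVec (hidden σ net j x)) i + net.bias j i)

/-- The function `ℝ^d → ℝ` computed by the network:
`A_{L+1} ∘ σ_L ∘ A_L ∘ ⋯ ∘ σ_1 ∘ A_1` (no activation on the output layer). -/
def realize (σ : ℝ → ℝ) (net : DNN d) (x : Fin d → ℝ) : ℝ :=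
  (((net.weight net.depth).mulVec
      (hidden σ net net.depth fun i => x (Fin.cast net.width_zero i))) +
    net.bias net.depth) (Fin.cast net.width_last.symm 0)

/-- `‖θ(h)‖_∞ ≤ B` : all network parameters are bounded by `B`. -/
def paramBound (net : DNN d) (B : ℝ) : Prop :=
  ∀ j ≤ net.depth, (∀ i k, |net.weight j i k| ≤ B) ∧ ∀ i, |net.bias j i| ≤ B

/-- `‖θ(h)‖₀` : the number of nonzero parameters of the network. -/
def sparsity (net : DNN d) : ℕ :=
  ∑ j ∈ Finset.range (net.depth + 1),
    (((Finset.univ : Finset (Fin (net.width (j + 1)) × Fin (net.width j))).filter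
        fun p => net.weight j p.1 p.2 ≠ 0).card +
      ((Finset.univ : Finset (Fin (net.width (j + 1)))).filter fun i => net.bias j i ≠ 0).card)

end DNN

/-- The networks realizing the class `H_σ(L, N, B, F)` (depth ≤ L, width ≤ N,
`‖θ‖_∞ ≤ B`, `‖h‖_{∞,X} ≤ F`). -/
def netClass (σ : ℝ → ℝ) (d : ℕ) (X : Set (Fin d → ℝ)) (L N B F : ℝ) : Set (DNN d) :=
  {net | (net.depth : ℝ) ≤ L ∧ (∀ j, 1 ≤ j → j ≤ net.depth → (net.width j : ℝ) ≤ N) ∧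
    net.paramBound B ∧ ∀ x ∈ X, |net.realize σ x| ≤ F}

/-- The networks realizing the sparsity constrained class `H_σ(L, N, B, F, S)`. -/
def netClassS (σ : ℝ → ℝ) (d : ℕ) (X : Set (Fin d → ℝ)) (L N B F S : ℝ) : Set (DNN d) :=
  {net | net ∈ netClass σ d X L N B F ∧ (net.sparsity : ℝ) ≤ S}

/-- The class of DNN predictors `H_σ(L, N, B, F)`. -/
def HClass (σ : ℝ → ℝ) (d : ℕ) (X : Set (Fin d → ℝ)) (L N B F : ℝ) :
    Set ((Fin d → ℝ) → ℝ) :=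
  {h | ∃ net ∈ netClass σ d X L N B F, h = net.realize σ}

/-- The sparsity constrained class of DNN predictors `H_σ(L, N, B, F, S)`. -/
def HClassS (σ : ℝ → ℝ) (d : ℕ) (X : Set (Fin d → ℝ)) (L N B F S : ℝ) :
    Set ((Fin d → ℝ) → ℝ) :=
  {h | ∃ net ∈ netClassS σ d X L N B F S, h = net.realize σ}

/-! ### Hölder balls -/

/-- The largest integer strictly smaller than `β` (for `β > 0`). -/
def sfloor (β : ℝ) : ℕ := ⌈β⌉₊ - 1

/-- Partial derivative in the `i`-th coordinate. -/
def pderiv {m : ℕ} (i : Fin m) (h : (Fin m → ℝ) → ℝ) : (Fin m → ℝ) → ℝ :=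
  fun x => deriv (fun t => h (Function.update x i t)) (x i)

/-- `∂^α h` for a multi-index `α`. -/
def multiPderiv {m : ℕ} (α : Fin m → ℕ) (h : (Fin m → ℝ) → ℝ) : (Fin m → ℝ) → ℝ :=
  (List.finRange m).foldr (fun i f => (pderiv i)^[α i] f) h

/-- The Hölder norm of `h` on the domain `D`. -/
def holderNorm {m : ℕ} (D : Set (Fin m → ℝ)) (β : ℝ) (h : (Fin m → ℝ) → ℝ) : ℝ :=
  (∑ α ∈ (Fintype.piFinset fun _ : Fin m => Finset.range (sfloor β + 1)).filter
      (fun α => ((∑ i, α i : ℕ) : ℝ) < β),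
      ⨆ x ∈ D, |multiPderiv α h x|) +
  ∑ α ∈ (Fintype.piFinset fun _ : Fin m => Finset.range (sfloor β + 1)).filter
      (fun α => (∑ i, α i) = sfloor β),
      ⨆ x ∈ D, ⨆ y ∈ D, ⨆ _ : x ≠ y,
        |multiPderiv α h x - multiPderiv α h y| / ‖x - y‖ ^ (β - (sfloor β : ℝ))

/-- The ball of `β`-Hölder functions on `D` with radius `A`. -/
def holderBall {m : ℕ} (D : Set (Fin m → ℝ)) (β A : ℝ) : Set ((Fin m → ℝ) → ℝ) :=
  {h | holderNorm D β h ≤ A}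

/-! ### Composition Hölder functions -/

/-- The cube `[l,u]^m`. -/
def cube (m : ℕ) (l u : ℝ) : Set (Fin m → ℝ) := {x | ∀ i, x i ∈ Set.Icc l u}

/-- `f` depends on at most `t` of its coordinates. -/
def dependsOnAtMost {m : ℕ} (t : ℕ) (f : (Fin m → ℝ) → ℝ) : Prop :=
  ∃ T : Finset (Fin m), T.card ≤ t ∧ ∀ x y : Fin m → ℝ, (∀ i ∈ T, x i = y i) → f x = f y

/-- Composition `g_{i-1} ∘ ⋯ ∘ g_0`. -/
def chainComp (dv : ℕ → ℕ) (g : (i : ℕ) → (Fin (dv i) → ℝ) → Fin (dv (i + 1)) → ℝ) :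
    (i : ℕ) → (Fin (dv 0) → ℝ) → Fin (dv i) → ℝ
  | 0, x => x
  | i + 1, x => g i (chainComp dv g i x)

/-- The class `G(q, d, t, β, A)` of composition Hölder functions. -/
def compClass (q dIn : ℕ) (dv tv : ℕ → ℕ) (βv : ℕ → ℝ) (A : ℝ)
    (hd0 : dv 0 = dIn) (hdq : dv (q + 1) = 1) : Set ((Fin dIn → ℝ) → ℝ) :=
  {h | ∃ (l u : ℕ → ℝ) (g : (i : ℕ) → (Fin (dv i) → ℝ) → Fin (dv (i + 1)) → ℝ),
    (∀ i ≤ q + 1, |l i| ≤ A ∧ |u i| ≤ A ∧ l i ≤ u i) ∧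
    (∀ i ≤ q, ∀ x ∈ cube (dv i) (l i) (u i), ∀ j, g i x j ∈ Set.Icc (l (i + 1)) (u (i + 1))) ∧
    (∀ i ≤ q, ∀ j, dependsOnAtMost (tv i) (fun x => g i x j) ∧
      (fun x => g i x j) ∈ holderBall (cube (dv i) (l i) (u i)) (βv i) A) ∧
    ∀ x : Fin dIn → ℝ,
      h x = chainComp dv g (q + 1) (fun k => x (Fin.cast hd0 k)) (Fin.cast hdq.symm 0)}

/-- The effective smoothness `β_i* = β_i ∏_{j=i+1}^q (β_j ∧ 1)`. -/
def betaStar (q : ℕ) (βv : ℕ → ℝ) (i : ℕ) : ℝ :=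
  βv i * ∏ j ∈ Finset.Icc (i + 1) q, min (βv j) 1

/-- `φ_{n,φ} = max_{0 ≤ i ≤ q} x^{-2β_i*/(2β_i* + t_i)}` evaluated at `x`. -/
def phiRate (q : ℕ) (βv : ℕ → ℝ) (tv : ℕ → ℕ) (x : ℝ) : ℝ :=
  (Finset.range (q + 1)).sup'
    (Finset.nonempty_range_iff.mpr (Nat.succ_ne_zero q))
    fun i => x ^ (-(2 * betaStar q βv i) / (2 * betaStar q βv i + tv i))

/-! ### Activation functions : assumption (A1) -/

/-- `g` is affine on the set `s`. -/
def AffineOn (g : ℝ → ℝ) (s : Set ℝ) : Prop := ∃ a b : ℝ, ∀ x ∈ s, g x = a * x + b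

/-- Continuous piecewise linear function. -/
def PiecewiseLinear (g : ℝ → ℝ) : Prop :=
  Continuous g ∧
    ∃ (K : ℕ) (a : ℕ → ℝ), 0 < K ∧ (∀ k, k + 1 < K → a k ≤ a (k + 1)) ∧
      (∀ k < K, derivWithin g (Set.Iio (a k)) (a k) ≠ derivWithin g (Set.Ioi (a k)) (a k)) ∧
      AffineOn g (Set.Iic (a 0)) ∧ AffineOn g (Set.Ici (a (K - 1))) ∧
      ∀ k, k + 1 < K → AffineOn g (Set.Icc (a k) (a (k + 1)))

/-- Locally quadratic function. -/
def LocallyQuadratic (g : ℝ → ℝ) : Prop :=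
  ∃ a b : ℝ, a < b ∧ ContDiffOn ℝ 3 g (Set.Ioo a b) ∧
    (∃ M : ℝ, ∀ x ∈ Set.Ioo a b, ∀ n ≤ 3, |iteratedDerivWithin n g (Set.Ioo a b) x| ≤ M) ∧
    ∃ t ∈ Set.Ioo a b, deriv g t ≠ 0 ∧ deriv (deriv g) t ≠ 0

/-- Assumption (A1) on the activation function. -/
def AssumptionA1 (σ : ℝ → ℝ) (Cσ : ℝ) : Prop :=
  0 < Cσ ∧ (∀ x y : ℝ, |σ x - σ y| ≤ Cσ * |x - y|) ∧
    (PiecewiseLinear σ ∨ LocallyQuadratic σ) ∧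
    ∃ v w : ℝ, v < w ∧ Set.Icc v w ⊆ Set.Icc (0 : ℝ) 1 ∧ ∀ z ∈ Set.Icc v w, σ z = z

/-! ### Risks, estimators, penalties -/

/-- The risk `R(h) = E[ℓ(h(X₀), Y₀)]`. -/
def risk {Ω : Type*} [MeasurableSpace Ω] (P : Measure Ω) {d : ℕ}
    (Z : ℤ → Ω → (Fin d → ℝ) × ℝ) (ℓ : ℝ → ℝ → ℝ) (h : (Fin d → ℝ) → ℝ) : ℝ :=
  ∫ ω, ℓ (h (Z 0 ω).1) (Z 0 ω).2 ∂P

/-- The empirical risk `(1/n) ∑_{i=1}^n ℓ(h(X_i), Y_i)`. -/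
def empRisk {Ω : Type*} {d : ℕ} (Z : ℤ → Ω → (Fin d → ℝ) × ℝ) (ℓ : ℝ → ℝ → ℝ)
    (n : ℕ) (h : (Fin d → ℝ) → ℝ) (ω : Ω) : ℝ :=
  (n : ℝ)⁻¹ * ∑ i ∈ Finset.Icc 1 n, ℓ (h (Z i ω).1) (Z i ω).2

/-- `g(h, z) = ℓ(h(x), y) - ℓ(h*(x), y)` for `z = (x, y)`. -/
def lossDiff {d : ℕ} (ℓ : ℝ → ℝ → ℝ) (hstar h : (Fin d → ℝ) → ℝ)
    (z : (Fin d → ℝ) × ℝ) : ℝ :=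
  ℓ (h z.1) z.2 - ℓ (hstar z.1) z.2

/-- The sparse penalty `J_n(h) = ∑_j π(|θ_j(h)|)`. -/
def penalty {d : ℕ} (pen : ℝ → ℝ) (net : DNN d) : ℝ :=
  ∑ j ∈ Finset.range (net.depth + 1),
    ((∑ i, ∑ k, pen |net.weight j i k|) + ∑ i, pen |net.bias j i|)

/-- The sparsity constrained class with the architecture of the NPDNN Hölder theorem,
with size parameter `r` (i.e. `r = φ(n)`). -/
def archClassR (σ : ℝ → ℝ) (d : ℕ) (X : Set (Fin d → ℝ)) (κ s L₀ N₀ B₀ S₀ F r : ℝ) :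
    Set ((Fin d → ℝ) → ℝ) :=
  HClassS σ d X (s * L₀ / (κ * s + d) * Real.log r)
    (N₀ * r ^ ((d : ℝ) / (κ * s + d)))
    (B₀ * r ^ (4 * ((d : ℝ) + s) / (κ * s + d)))
    F
    (s * S₀ / (κ * s + d) * r ^ ((d : ℝ) / (κ * s + d)) * Real.log r)

/-- `u_n ≲ v_n`. -/
def Lesssim (u v : ℕ → ℝ) : Prop := ∃ c : ℝ, 0 < c ∧ ∀ n, u n ≤ c * v n

/-- `u_n ≍ v_n`. -/
def Asymp (u v : ℕ → ℝ) : Prop := Lesssim u v ∧ Lesssim v u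

/-! ### Covering numbers, mixing coefficients, Huber loss -/

/-- `ε`-covering number of a class of real valued functions (w.r.t. the sup norm). -/
def coveringNumber {α : Type*} (G : Set (α → ℝ)) (ε : ℝ) : ℕ∞ :=
  sInf ((↑) '' {k : ℕ | ∃ f : Fin k → α → ℝ, ∀ g ∈ G, ∃ i, ∀ x, |g x - f i x| ≤ ε})

/-- σ-algebra generated by `Z_t, t ≤ 0`. -/
def pastSigma {Ω E : Type*} [MeasurableSpace E] (Z : ℤ → Ω → E) : MeasurableSpace Ω :=
  ⨆ t : {t : ℤ // t ≤ 0}, MeasurableSpace.comap (Z t) inferInstance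

/-- σ-algebra generated by `Z_t, t ≥ k`. -/
def futureSigma {Ω E : Type*} [MeasurableSpace E] (Z : ℤ → Ω → E) (k : ℕ) :
    MeasurableSpace Ω :=
  ⨆ t : {t : ℤ // (k : ℤ) ≤ t}, MeasurableSpace.comap (Z t) inferInstance

/-- The `α`-mixing coefficient of the process `Z`. -/
def alphaMix {Ω E : Type*} [MeasurableSpace Ω] [MeasurableSpace E]
    (P : Measure Ω) (Z : ℤ → Ω → E) (k : ℕ) : ℝ :=
  ⨆ A : {A : Set Ω // MeasurableSet[pastSigma Z] A},
    ⨆ B : {B : Set Ω // MeasurableSet[futureSigma Z k] B},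
      |(P (↑A ∩ ↑B)).toReal - (P ↑A).toReal * (P ↑B).toReal|

/-- The Huber loss with parameter `δ`. -/
def huber (δ : ℝ) (y y' : ℝ) : ℝ :=
  if |y - y'| ≤ δ then (y - y') ^ 2 / 2 else δ * |y - y'| - δ ^ 2 / 2

end


lemma aux_iSup_extract {ι : Type*} (s : Set ι) (F : ι → ℝ) {a θ : ℝ}
    (ha : 0 < a) (hθ : 0 < θ) (h : a ≤ ⨆ g ∈ s, F g) : ∃ g ∈ s, a - θ < F g := by
  by_contra h'
  push_neg at h'
  have hb : (⨆ g ∈ s, F g) ≤ max (a - θ) 0 := by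
    refine Real.iSup_le (fun g => Real.iSup_le (fun hg => ?_) (le_max_right _ _)) (le_max_right _ _)
    exact le_max_of_le_left (h' g hg)
  have : max (a - θ) 0 < a := max_lt (by linarith) ha
  linarith [h.trans hb]

lemma aux_Int {Ω : Type*} [MeasurableSpace Ω] (P : Measure Ω) [IsProbabilityMeasure P]
    {d : ℕ} (Z : ℤ → Ω → (Fin d → ℝ) × ℝ) (hZmeas : ∀ t, Measurable (Z t))
    (G : Set ((Fin d → ℝ) × ℝ → ℝ)) (C₁ : ℝ)
    (hGmeas : ∀ g ∈ G, Measurable g)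
    (hGdev : ∀ g ∈ G, ∀ᵐ ω ∂P, |g (Z 1 ω) - ∫ ω', g (Z 1 ω') ∂P| ≤ C₁) :
    ∀ g ∈ G, Integrable (fun ω => g (Z 1 ω)) P := by
  intro g hg
  refine ⟨((hGmeas g hg).comp (hZmeas 1)).aestronglyMeasurable,
    HasFiniteIntegral.of_bounded (C := |∫ ω', g (Z 1 ω') ∂P| + C₁) ?_⟩
  filter_upwards [hGdev g hg] with ω h
  have h2 := abs_sub_abs_le_abs_sub (g (Z 1 ω)) (∫ ω', g (Z 1 ω') ∂P)
  simp only [Real.norm_eq_abs]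
  linarith

lemma aux_Int2 {Ω : Type*} [MeasurableSpace Ω] (P : Measure Ω) [IsProbabilityMeasure P]
    {d : ℕ} (Z : ℤ → Ω → (Fin d → ℝ) × ℝ) (hZmeas : ∀ t, Measurable (Z t))
    (G : Set ((Fin d → ℝ) × ℝ → ℝ)) (C₁ : ℝ)
    (hGmeas : ∀ g ∈ G, Measurable g)
    (hGdev : ∀ g ∈ G, ∀ᵐ ω ∂P, |g (Z 1 ω) - ∫ ω', g (Z 1 ω') ∂P| ≤ C₁) :
    ∀ g ∈ G, Integrable (fun ω => g (Z 1 ω) ^ 2) P := by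
  intro g hg
  refine ⟨(((hGmeas g hg).comp (hZmeas 1)).pow measurable_const).aestronglyMeasurable,
    HasFiniteIntegral.of_bounded (C := (|∫ ω', g (Z 1 ω') ∂P| + C₁) ^ 2) ?_⟩
  filter_upwards [hGdev g hg] with ω h
  have h2 := abs_sub_abs_le_abs_sub (g (Z 1 ω)) (∫ ω', g (Z 1 ω') ∂P)
  have h3 : |g (Z 1 ω)| ≤ |∫ ω', g (Z 1 ω') ∂P| + C₁ := by linarith
  have h4 : (0:ℝ) ≤ |g (Z 1 ω)| := abs_nonneg _
  simp only [Real.norm_eq_abs, abs_pow, sq_abs]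
  calc g (Z 1 ω) ^ 2 = |g (Z 1 ω)| ^ 2 := by rw [sq_abs]
    _ ≤ (|∫ ω', g (Z 1 ω') ∂P| + C₁) ^ 2 := by nlinarith

lemma aux_Mu0 {Ω : Type*} [MeasurableSpace Ω] (P : Measure Ω)
    {d : ℕ} (Z : ℤ → Ω → (Fin d → ℝ) × ℝ)
    (G : Set ((Fin d → ℝ) × ℝ → ℝ)) (C₂ : ℝ) (hC₂ : 0 ≤ C₂)
    (hGvar : ∀ g ∈ G, (∫ ω, g (Z 1 ω) ^ 2 ∂P) ≤ C₂ * ∫ ω, g (Z 1 ω) ∂P)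
    (hInt2 : ∀ g ∈ G, Integrable (fun ω => g (Z 1 ω) ^ 2) P) :
    ∀ g ∈ G, 0 ≤ ∫ ω, g (Z 1 ω) ∂P := by
  intro g hg
  have hnn : 0 ≤ ∫ ω, g (Z 1 ω) ^ 2 ∂P := integral_nonneg fun ω => sq_nonneg _
  rcases eq_or_lt_of_le hC₂ with h2 | h2
  · have hsq : (∫ ω, g (Z 1 ω) ^ 2 ∂P) = 0 :=
      le_antisymm (by have := hGvar g hg; rw [← h2] at this; linarith) hnn
    have hz : (fun ω => g (Z 1 ω) ^ 2) =ᵐ[P] 0 :=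
      (integral_eq_zero_iff_of_nonneg (fun ω => sq_nonneg _) (hInt2 g hg)).mp hsq
    have hz2 : (fun ω => g (Z 1 ω)) =ᵐ[P] 0 := by
      filter_upwards [hz] with ω h
      simpa [pow_eq_zero_iff] using h
    rw [integral_congr_ae hz2]
    simp
  · by_contra hneg
    push_neg at hneg
    have := hGvar g hg
    nlinarith

lemma aux_Ziter {Ω : Type*} {d : ℕ} (Z : ℤ → Ω → (Fin d → ℝ) × ℝ)
    (T : Ω → Ω) (hTZ : ∀ t ω, Z (t + 1) ω = Z t (T ω)) :
    ∀ j : ℕ, ∀ ω, Z ((j : ℤ) + 1) ω = Z 1 (T^[j] ω) := by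
  intro j
  induction j with
  | zero => intro ω; simp
  | succ j ih =>
    intro ω
    have h1 : ((j + 1 : ℕ) : ℤ) + 1 = ((j : ℤ) + 1) + 1 := by push_cast; ring
    rw [h1, hTZ ((j : ℤ) + 1) ω, ih (T ω), Function.iterate_succ_apply]

lemma aux_Badnull {Ω : Type*} [MeasurableSpace Ω] (P : Measure Ω)
    {d : ℕ} (Z : ℤ → Ω → (Fin d → ℝ) × ℝ) (hZmeas : ∀ t, Measurable (Z t))
    (T : Ω → Ω) (hT : Ergodic T P) (hTZ : ∀ t ω, Z (t + 1) ω = Z t (T ω))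
    (G : Set ((Fin d → ℝ) × ℝ → ℝ)) (C₁ : ℝ)
    (hGmeas : ∀ g ∈ G, Measurable g)
    (hGdev : ∀ g ∈ G, ∀ᵐ ω ∂P, |g (Z 1 ω) - ∫ ω', g (Z 1 ω') ∂P| ≤ C₁) :
    ∀ g ∈ G, ∀ j : ℕ, 1 ≤ j →
      P {ω | ¬ |g (Z j ω) - ∫ ω', g (Z 1 ω') ∂P| ≤ C₁} = 0 := by
  intro g hg j hj
  set m := ∫ ω', g (Z 1 ω') ∂P with hm
  have hZiter := aux_Ziter Z T hTZ
  have hmeas1 : MeasurableSet {ω | ¬ |g (Z 1 ω) - m| ≤ C₁} := by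
    have : Measurable fun ω => |g (Z 1 ω) - m| :=
      (((hGmeas g hg).comp (hZmeas 1)).sub measurable_const).abs
    simpa using (measurableSet_lt measurable_const this)
  have h0 : P {ω | ¬ |g (Z 1 ω) - m| ≤ C₁} = 0 := by
    have := hGdev g hg
    rw [ae_iff] at this
    exact this
  have hjj : (j : ℤ) = ((j - 1 : ℕ) : ℤ) + 1 := by push_cast [hj]; omega
  have hset : {ω | ¬ |g (Z j ω) - m| ≤ C₁} = T^[j-1] ⁻¹' {ω | ¬ |g (Z 1 ω) - m| ≤ C₁} := by
    ext ω
    simp only [Set.mem_setOf_eq, Set.mem_preimage]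
    rw [hjj, hZiter (j-1) ω]
  rw [hset, (hT.toMeasurePreserving.iterate (j-1)).measure_preimage hmeas1.nullMeasurableSet]
  exact h0

lemma aux_Center {Ω : Type*} [MeasurableSpace Ω] (P : Measure Ω) [IsProbabilityMeasure P]
    {d : ℕ} (Z : ℤ → Ω → (Fin d → ℝ) × ℝ)
    (φ : ℕ → ℕ) (C cγ cA : ℝ) (hC : 0 < C) (hcγ : 0 < cγ) (hcA : 0 < cA) (n₀ : ℕ)
    (hA4 : ∀ (g : (Fin d → ℝ) × ℝ → ℝ) (γ A : ℝ), 0 ≤ γ → 0 < A → Measurable g →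
      (∀ z, |g z| ≤ A) → (∫ ω, g (Z 1 ω) ∂P) = 0 → (∫ ω, g (Z 1 ω) ^ 2 ∂P) ≤ γ ^ 2 →
      ∀ ε : ℝ, 0 < ε → ∀ n : ℕ, n₀ ≤ n →
        (P {ω | ε ≤ (n : ℝ)⁻¹ * ∑ i ∈ Finset.Icc 1 n, g (Z i ω)}).toReal ≤
          C * Real.exp (-(ε ^ 2 * (φ n : ℝ)) / (cγ * γ ^ 2 + cA * ε * A)))
    (G : Set ((Fin d → ℝ) × ℝ → ℝ)) (C₁ C₂ : ℝ) (hC₁ : 0 ≤ C₁) (hC₂ : 0 ≤ C₂)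
    (hGmeas : ∀ g ∈ G, Measurable g)
    (hGdev : ∀ g ∈ G, ∀ᵐ ω ∂P, |g (Z 1 ω) - ∫ ω', g (Z 1 ω') ∂P| ≤ C₁)
    (hGvar : ∀ g ∈ G, (∫ ω, g (Z 1 ω) ^ 2 ∂P) ≤ C₂ * ∫ ω, g (Z 1 ω) ∂P)
    (hInt : ∀ g ∈ G, Integrable (fun ω => g (Z 1 ω)) P)
    (hInt2 : ∀ g ∈ G, Integrable (fun ω => g (Z 1 ω) ^ 2) P)
    (hμ0 : ∀ g ∈ G, 0 ≤ ∫ ω, g (Z 1 ω) ∂P)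
    (hbadnull : ∀ g ∈ G, ∀ j : ℕ, 1 ≤ j →
      P {ω | ¬ |g (Z j ω) - ∫ ω', g (Z 1 ω') ∂P| ≤ C₁} = 0)
    (ε u : ℝ) (hε : 0 < ε) (hu : 0 < u) (hu1 : u ≤ 1)
    (n : ℕ) (hn : n₀ ≤ n) (hn1 : 1 ≤ n) :
    ∀ g₀ ∈ G, P {ω | u * Real.sqrt ε * Real.sqrt ((∫ ω', g₀ (Z 1 ω') ∂P) + ε) ≤
      (∫ ω', g₀ (Z 1 ω') ∂P) - (n : ℝ)⁻¹ * ∑ j ∈ Finset.Icc 1 n, g₀ (Z j ω)} ≤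
      ENNReal.ofReal (C * Real.exp (-(u ^ 2 * ε * (φ n : ℝ)) / (cγ * C₂ + cA * C₁))) := by
  intro g₀ hg₀
  set m := ∫ ω', g₀ (Z 1 ω') ∂P with hm
  have hm0 : 0 ≤ m := hμ0 g₀ hg₀
  set ε' := u * Real.sqrt ε * Real.sqrt (m + ε) with hε'def
  have hmε : 0 < m + ε := by linarith
  have hε'pos : 0 < ε' := by
    have := Real.sqrt_pos.mpr hε
    have := Real.sqrt_pos.mpr hmε
    positivity
  have hε'le : ε' ≤ m + ε := by
    have h1 : Real.sqrt ε ≤ Real.sqrt (m + ε) := Real.sqrt_le_sqrt (by linarith)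
    have h2 : Real.sqrt (m + ε) * Real.sqrt (m + ε) = m + ε := Real.mul_self_sqrt hmε.le
    calc ε' = u * Real.sqrt ε * Real.sqrt (m + ε) := hε'def
      _ ≤ 1 * Real.sqrt (m + ε) * Real.sqrt (m + ε) := by
          refine mul_le_mul_of_nonneg_right ?_ (Real.sqrt_nonneg _)
          exact mul_le_mul hu1 h1 (Real.sqrt_nonneg _) zero_le_one
      _ = m + ε := by rw [one_mul, h2]
  have hcard : (Finset.Icc 1 n).card = n := by rw [Nat.card_Icc]; omega
  set badU := ⋃ j ∈ Finset.Icc 1 n, {ω | ¬ |g₀ (Z j ω) - m| ≤ C₁} with hbadU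
  have hbadU0 : P badU = 0 := by
    rw [hbadU]
    refine measure_iUnion_null fun j => measure_iUnion_null fun hj => ?_
    exact hbadnull g₀ hg₀ j (Finset.mem_Icc.mp hj).1
  have hgoodsum : ∀ ω, ω ∉ badU → ∀ j ∈ Finset.Icc 1 n, |g₀ (Z j ω) - m| ≤ C₁ := by
    intro ω hω j hj
    by_contra hc
    exact hω (Set.mem_biUnion hj hc)
  rcases eq_or_lt_of_le hC₁ with hC10 | hC1pos
  · -- C₁ = 0
    have hsub : {ω | ε' ≤ m - (n : ℝ)⁻¹ * ∑ j ∈ Finset.Icc 1 n, g₀ (Z j ω)} ⊆ badU := by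
      intro ω hω
      by_contra hb
      have hgood := hgoodsum ω hb
      have hsum : ∑ j ∈ Finset.Icc 1 n, g₀ (Z j ω) = ∑ j ∈ Finset.Icc 1 n, m := by
        refine Finset.sum_congr rfl fun j hj => ?_
        have := hgood j hj
        rw [← hC10] at this
        have := abs_nonpos_iff.mp this
        linarith [sub_eq_zero.mp this]
      have hωle : ε' ≤ m - (n : ℝ)⁻¹ * ∑ j ∈ Finset.Icc 1 n, g₀ (Z j ω) := hω
      rw [hsum, Finset.sum_const, hcard, nsmul_eq_mul] at hωle
      have hnne : (n : ℝ) ≠ 0 := by positivity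
      rw [inv_mul_cancel_left₀ hnne] at hωle
      linarith
    calc P _ ≤ P badU := measure_mono hsub
      _ = 0 := hbadU0
      _ ≤ _ := zero_le
  · -- 0 < C₁
    set gtr : (Fin d → ℝ) × ℝ → ℝ := fun z => max (-C₁) (min C₁ (m - g₀ z)) with hgtrdef
    have hgtrmeas : Measurable gtr :=
      measurable_const.max (measurable_const.min (measurable_const.sub (hGmeas g₀ hg₀)))
    have hgtrbd : ∀ z, |gtr z| ≤ C₁ := fun z =>
      abs_le.mpr ⟨le_max_left _ _, max_le (by linarith) (min_le_left _ _)⟩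
    have hclamp : ∀ x : ℝ, |x - m| ≤ C₁ → max (-C₁) (min C₁ (m - x)) = m - x := by
      intro x hx
      obtain ⟨h1, h2⟩ := abs_le.mp hx
      rw [min_eq_right (by linarith), max_eq_right (by linarith)]
    have hae : ∀ᵐ ω ∂P, gtr (Z 1 ω) = m - g₀ (Z 1 ω) := by
      filter_upwards [hGdev g₀ hg₀] with ω h using hclamp _ h
    have hint0 : (∫ ω, gtr (Z 1 ω) ∂P) = 0 := by
      rw [integral_congr_ae hae, integral_sub (integrable_const m) (hInt g₀ hg₀),
        integral_const]
      simp [hm]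
    have hsq : (∫ ω, gtr (Z 1 ω) ^ 2 ∂P) ≤ Real.sqrt (C₂ * m) ^ 2 := by
      have he : (fun ω => gtr (Z 1 ω) ^ 2) =ᵐ[P]
          fun ω => g₀ (Z 1 ω) ^ 2 - (2 * m) * g₀ (Z 1 ω) + m ^ 2 := by
        filter_upwards [hae] with ω h
        rw [h]; ring
      rw [integral_congr_ae he, Real.sq_sqrt (by positivity)]
      have hi1 : Integrable (fun ω => g₀ (Z 1 ω) ^ 2 - 2 * m * g₀ (Z 1 ω)) P :=
        (hInt2 g₀ hg₀).sub ((hInt g₀ hg₀).const_mul (2 * m))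
      have hi2 : Integrable (fun ω => 2 * m * g₀ (Z 1 ω)) P := (hInt g₀ hg₀).const_mul (2 * m)
      rw [integral_add hi1 (integrable_const _),
        integral_sub (hInt2 g₀ hg₀) hi2, integral_const_mul, integral_const]
      have hv := hGvar g₀ hg₀
      simp only [probReal_univ, measure_univ, ENNReal.toReal_one, smul_eq_mul, one_mul, ← hm]
      nlinarith [sq_nonneg m]
    have hA4app := hA4 gtr (Real.sqrt (C₂ * m)) C₁ (Real.sqrt_nonneg _) hC1pos hgtrmeas hgtrbd
      hint0 hsq ε' hε'pos n hn
    set Ahat := {ω | ε' ≤ (n : ℝ)⁻¹ * ∑ j ∈ Finset.Icc 1 n, gtr (Z j ω)} with hAhatdef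
    have hsub : {ω | ε' ≤ m - (n : ℝ)⁻¹ * ∑ j ∈ Finset.Icc 1 n, g₀ (Z j ω)} ⊆ Ahat ∪ badU := by
      intro ω hω
      by_cases hb : ω ∈ badU
      · exact Or.inr hb
      · left
        have hgood := hgoodsum ω hb
        have hsum : ∑ j ∈ Finset.Icc 1 n, gtr (Z j ω)
            = ∑ j ∈ Finset.Icc 1 n, (m - g₀ (Z j ω)) :=
          Finset.sum_congr rfl fun j hj => hclamp _ (hgood j hj)
        show ε' ≤ (n : ℝ)⁻¹ * ∑ j ∈ Finset.Icc 1 n, gtr (Z j ω)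
        rw [hsum, Finset.sum_sub_distrib, Finset.sum_const, hcard, nsmul_eq_mul, mul_sub]
        have hnne : (n : ℝ) ≠ 0 := by positivity
        rw [inv_mul_cancel_left₀ hnne]
        exact hω
    have hΔpos : 0 < cγ * C₂ + cA * C₁ := by positivity
    have hexp : C * Real.exp (-(ε' ^ 2 * (φ n : ℝ)) /
          (cγ * Real.sqrt (C₂ * m) ^ 2 + cA * ε' * C₁)) ≤
        C * Real.exp (-(u ^ 2 * ε * (φ n : ℝ)) / (cγ * C₂ + cA * C₁)) := by
      rw [Real.sq_sqrt (by positivity)]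
      refine mul_le_mul_of_nonneg_left ?_ hC.le
      apply Real.exp_le_exp.mpr
      have hden1 : 0 < cγ * (C₂ * m) + cA * ε' * C₁ := by positivity
      rw [neg_div, neg_div, neg_le_neg_iff, div_le_div_iff₀ hΔpos hden1]
      have hε'sq : ε' ^ 2 = u ^ 2 * ε * (m + ε) := by
        rw [hε'def, mul_pow, mul_pow, Real.sq_sqrt hε.le, Real.sq_sqrt hmε.le]
      rw [hε'sq]
      have key : cγ * (C₂ * m) + cA * ε' * C₁ ≤ (m + ε) * (cγ * C₂ + cA * C₁) := by
        nlinarith [mul_nonneg (mul_nonneg hcγ.le hC₂) hε.le,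
          mul_le_mul_of_nonneg_left hε'le (mul_nonneg hcA.le hC₁)]
      have hφ0 : (0:ℝ) ≤ (φ n : ℝ) := Nat.cast_nonneg _
      nlinarith [mul_le_mul_of_nonneg_left key
        (mul_nonneg (mul_nonneg (sq_nonneg u) hε.le) hφ0)]
    calc P _ ≤ P (Ahat ∪ badU) := measure_mono hsub
      _ ≤ P Ahat + P badU := measure_union_le _ _
      _ = P Ahat := by rw [hbadU0, add_zero]
      _ = ENNReal.ofReal (P Ahat).toReal := (ENNReal.ofReal_toReal (measure_ne_top P _)).symm
      _ ≤ _ := ENNReal.ofReal_le_ofReal (hA4app.trans hexp)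


theorem stmt5
    {Ω : Type*} [MeasurableSpace Ω] (P : Measure Ω) [IsProbabilityMeasure P]
    (d : ℕ) (hd : 0 < d)
    (Z : ℤ → Ω → (Fin d → ℝ) × ℝ) (hZmeas : ∀ t, Measurable (Z t))
    (Xset : Set (Fin d → ℝ)) (Yset : Set ℝ)
    (hZmem : ∀ t ω, (Z t ω).1 ∈ Xset ∧ (Z t ω).2 ∈ Yset)
    (T : Ω → Ω) (hT : Ergodic T P) (hTZ : ∀ t ω, Z (t + 1) ω = Z t (T ω))
    (φ : ℕ → ℕ) (hφmono : Monotone φ) (hφle : ∀ n, φ n ≤ n) (hφpos : ∀ n, 1 ≤ φ n)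
    (C cγ cA : ℝ) (hC : 0 < C) (hcγ : 0 < cγ) (hcA : 0 < cA)
    (n₀ : ℕ) (hn₀ : 1 ≤ n₀)
    (hA4 : ∀ (g : (Fin d → ℝ) × ℝ → ℝ) (γ A : ℝ), 0 ≤ γ → 0 < A → Measurable g →
      (∀ z, |g z| ≤ A) → (∫ ω, g (Z 1 ω) ∂P) = 0 → (∫ ω, g (Z 1 ω) ^ 2 ∂P) ≤ γ ^ 2 →
      ∀ ε : ℝ, 0 < ε → ∀ n : ℕ, n₀ ≤ n →
        (P {ω | ε ≤ (n : ℝ)⁻¹ * ∑ i ∈ Finset.Icc 1 n, g (Z i ω)}).toReal ≤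
          C * Real.exp (-(ε ^ 2 * (φ n : ℝ)) / (cγ * γ ^ 2 + cA * ε * A)))
    (G : Set ((Fin d → ℝ) × ℝ → ℝ)) (C₁ C₂ : ℝ) (hC₁ : 0 ≤ C₁) (hC₂ : 0 ≤ C₂)
    (hGmeas : ∀ g ∈ G, Measurable g)
    (hGdev : ∀ g ∈ G, ∀ᵐ ω ∂P, |g (Z 1 ω) - ∫ ω', g (Z 1 ω') ∂P| ≤ C₁)
    (hGvar : ∀ g ∈ G, (∫ ω, g (Z 1 ω) ^ 2 ∂P) ≤ C₂ * ∫ ω, g (Z 1 ω) ∂P) :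
    ∃ c : ℝ, 0 < c ∧ ∀ ε : ℝ, 0 < ε → ∀ u : ℝ, 0 < u → u ≤ 1 → ∀ n : ℕ, n₀ ≤ n →
      P {ω | 4 * u * Real.sqrt ε ≤
          ⨆ g ∈ G, ((∫ ω', g (Z 1 ω') ∂P) -
              (n : ℝ)⁻¹ * ∑ i ∈ Finset.Icc 1 n, g (Z i ω)) /
            Real.sqrt ((∫ ω', g (Z 1 ω') ∂P) + ε)} ≤
        ENNReal.ofReal c * (coveringNumber G (u * ε) : ℝ≥0∞) *
          ENNReal.ofReal (Real.exp (-(u ^ 2 * ε * (φ n : ℝ)) / (cγ * C₂ + cA * C₁))) := by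
  
  classical
  refine ⟨C + 1, by linarith, ?_⟩
  intro ε hε u hu hu1 n hn
  have hn1 : 1 ≤ n := le_trans hn₀ hn
  have hInt := aux_Int P Z hZmeas G C₁ hGmeas hGdev
  have hInt2 := aux_Int2 P Z hZmeas G C₁ hGmeas hGdev
  have hμ0 := aux_Mu0 P Z G C₂ hC₂ hGvar hInt2
  have hbadnull := aux_Badnull P Z hZmeas T hT hTZ G C₁ hGmeas hGdev
  have hcenter := aux_Center P Z φ C cγ cA hC hcγ hcA n₀ hA4 G C₁ C₂ hC₁ hC₂ hGmeas hGdev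
    hGvar hInt hInt2 hμ0 hbadnull ε u hε hu hu1 n hn hn1
  set B := Real.exp (-(u ^ 2 * ε * (φ n : ℝ)) / (cγ * C₂ + cA * C₁)) with hBdef
  have hBpos : 0 < B := Real.exp_pos _
  have hsqε : 0 < Real.sqrt ε := Real.sqrt_pos.mpr hε
  by_cases hS : {k : ℕ | ∃ fs : Fin k → ((Fin d → ℝ) × ℝ) → ℝ,
      ∀ g ∈ G, ∃ i, ∀ x, |g x - fs i x| ≤ u * ε}.Nonempty
  case neg =>
    have hN : coveringNumber G (u * ε) = ⊤ := by
      unfold coveringNumber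
      rw [Set.not_nonempty_iff_eq_empty.mp hS]
      simp
    rw [hN]
    have h1 : ENNReal.ofReal (C + 1) ≠ 0 := by
      rw [ne_eq, ENNReal.ofReal_eq_zero]
      push_neg
      linarith
    have h2 : ENNReal.ofReal B ≠ 0 := by
      rw [ne_eq, ENNReal.ofReal_eq_zero]
      push_neg
      exact hBpos
    rw [ENat.toENNReal_top, ENNReal.mul_top h1, ENNReal.top_mul h2]
    exact le_top
  case pos =>
    have hmem := Nat.sInf_mem hS
    set k₀ := sInf {k : ℕ | ∃ fs : Fin k → ((Fin d → ℝ) × ℝ) → ℝ,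
      ∀ g ∈ G, ∃ i, ∀ x, |g x - fs i x| ≤ u * ε} with hk₀def
    obtain ⟨f, hf⟩ := hmem
    have hk₀N : ((k₀ : ℕ) : ℝ≥0∞) ≤ ((coveringNumber G (u * ε) : ℕ∞) : ℝ≥0∞) := by
      have h1 : (k₀ : ℕ∞) ≤ coveringNumber G (u * ε) := by
        refine le_sInf ?_
        rintro x ⟨k, hk, rfl⟩
        exact_mod_cast Nat.sInf_le hk
      simpa using ENat.toENNReal_le.mpr h1
    have hcard : (Finset.Icc 1 n).card = n := by simp
    have hμdiff : ∀ g ∈ G, ∀ g' ∈ G, (∀ x, |g x - g' x| ≤ 2 * (u * ε)) →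
        (∫ ω, g (Z 1 ω) ∂P) ≤ (∫ ω, g' (Z 1 ω) ∂P) + 2 * (u * ε) := by
      intro g hg g' hg' hb
      have h1 : (∫ ω, g (Z 1 ω) ∂P) ≤ ∫ ω, (g' (Z 1 ω) + 2 * (u * ε)) ∂P := by
        refine integral_mono (hInt g hg) ((hInt g' hg').add (integrable_const _)) fun ω => ?_
        have := abs_le.mp (hb (Z 1 ω))
        simp only
        linarith [this.2]
      rwa [integral_add (hInt g' hg') (integrable_const _), integral_const, probReal_univ,
        smul_eq_mul, one_mul] at h1
    set Hyp : Fin k₀ → Prop := fun i => ∃ g ∈ G, ∀ x, |g x - f i x| ≤ u * ε with hHypdef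
    have hrep : ∀ i : Fin k₀, ∃ gi : ((Fin d → ℝ) × ℝ) → ℝ, Hyp i →
        gi ∈ G ∧ (∀ x, |gi x - f i x| ≤ u * ε) ∧
          ∀ g' ∈ G, (∀ x, |g' x - f i x| ≤ u * ε) →
            (∫ ω, g' (Z 1 ω) ∂P) ≤ (∫ ω, gi (Z 1 ω) ∂P) + u * ε / 100 := by
      intro i
      by_cases h : Hyp i
      · obtain ⟨g1, hg1G, hg1f⟩ := h
        set A := (fun g : ((Fin d → ℝ) × ℝ) → ℝ => ∫ ω, g (Z 1 ω) ∂P) ''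
          {g | g ∈ G ∧ ∀ x, |g x - f i x| ≤ u * ε} with hAdef
        have hAne : A.Nonempty := ⟨_, ⟨g1, ⟨hg1G, hg1f⟩, rfl⟩⟩
        have hAbd : BddAbove A := by
          refine ⟨(∫ ω, g1 (Z 1 ω) ∂P) + 2 * (u * ε), ?_⟩
          rintro y ⟨g', ⟨hg'G, hg'f⟩, rfl⟩
          refine hμdiff g' hg'G g1 hg1G fun x => ?_
          calc |g' x - g1 x| = |(g' x - f i x) + (f i x - g1 x)| := by rw [sub_add_sub_cancel]
            _ ≤ |g' x - f i x| + |f i x - g1 x| := abs_add_le _ _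
            _ ≤ u * ε + u * ε := by
                rw [abs_sub_comm (f i x)]
                exact add_le_add (hg'f x) (hg1f x)
            _ = 2 * (u * ε) := by ring
        have hlt : sSup A - u * ε / 100 < sSup A := by
          have : 0 < u * ε / 100 := by positivity
          linarith
        obtain ⟨y, hyA, hy⟩ := exists_lt_of_lt_csSup hAne hlt
        obtain ⟨gi, ⟨hgiG, hgif⟩, rfl⟩ := hyA
        exact ⟨gi, fun _ => ⟨hgiG, hgif, fun g' hg'G hg'f =>
          le_trans (le_csSup hAbd ⟨g', ⟨hg'G, hg'f⟩, rfl⟩) (by linarith)⟩⟩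
      · exact ⟨fun _ => 0, fun hh => absurd hh h⟩
    choose rep hrepspec using hrep
    set Ev : Fin k₀ → Set Ω := fun i => {ω | Hyp i ∧ u * Real.sqrt ε *
        Real.sqrt ((∫ ω', rep i (Z 1 ω') ∂P) + ε) ≤
        (∫ ω', rep i (Z 1 ω') ∂P) - (n : ℝ)⁻¹ * ∑ j ∈ Finset.Icc 1 n, rep i (Z j ω)}
      with hEvdef
    have hsub : {ω | 4 * u * Real.sqrt ε ≤
        ⨆ g ∈ G, ((∫ ω', g (Z 1 ω') ∂P) -
            (n : ℝ)⁻¹ * ∑ i ∈ Finset.Icc 1 n, g (Z i ω)) /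
          Real.sqrt ((∫ ω', g (Z 1 ω') ∂P) + ε)} ⊆ ⋃ i, Ev i := by
      intro ω hω
      simp only [Set.mem_setOf_eq] at hω
      obtain ⟨g, hgG, hgt⟩ := aux_iSup_extract G
        (fun g => ((∫ ω', g (Z 1 ω') ∂P) -
            (n : ℝ)⁻¹ * ∑ i ∈ Finset.Icc 1 n, g (Z i ω)) /
          Real.sqrt ((∫ ω', g (Z 1 ω') ∂P) + ε))
        (by positivity) (show 0 < u * Real.sqrt ε / 100 by positivity) hω
      obtain ⟨i, hi⟩ := hf g hgG
      have hH : Hyp i := ⟨g, hgG, hi⟩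
      obtain ⟨hgiG, hgif, hgimax⟩ := hrepspec i hH
      set a := ∫ ω', g (Z 1 ω') ∂P with hadef
      set m := ∫ ω', rep i (Z 1 ω') ∂P with hmdef
      have ha0 : 0 ≤ a := hμ0 g hgG
      have hm0 : 0 ≤ m := hμ0 (rep i) hgiG
      have hs0 : 0 < Real.sqrt (a + ε) := Real.sqrt_pos.mpr (by linarith)
      have hsε : Real.sqrt ε ≤ Real.sqrt (a + ε) := Real.sqrt_le_sqrt (by linarith)
      have hgg : ∀ x, |g x - rep i x| ≤ 2 * (u * ε) := by
        intro x
        calc |g x - rep i x| = |(g x - f i x) + (f i x - rep i x)| := by rw [sub_add_sub_cancel]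
          _ ≤ |g x - f i x| + |f i x - rep i x| := abs_add_le _ _
          _ ≤ u * ε + u * ε := by
              rw [abs_sub_comm (f i x)]
              exact add_le_add (hi x) (hgif x)
          _ = 2 * (u * ε) := by ring
      have hd0 : (4 * u * Real.sqrt ε - u * Real.sqrt ε / 100) * Real.sqrt (a + ε) <
          a - (n : ℝ)⁻¹ * ∑ j ∈ Finset.Icc 1 n, g (Z j ω) :=
        (lt_div_iff₀ hs0).mp hgt
      have ham : a ≤ m + u * ε / 100 := hgimax g hgG hi
      have hma : m ≤ a + 2 * (u * ε) :=
        hμdiff (rep i) hgiG g hgG (fun x => by rw [abs_sub_comm]; exact hgg x)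
      have hScmp : (n : ℝ)⁻¹ * ∑ j ∈ Finset.Icc 1 n, rep i (Z j ω) ≤
          (n : ℝ)⁻¹ * ∑ j ∈ Finset.Icc 1 n, g (Z j ω) + 2 * (u * ε) := by
        have h1 : ∑ j ∈ Finset.Icc 1 n, rep i (Z j ω) ≤
            ∑ j ∈ Finset.Icc 1 n, (g (Z j ω) + 2 * (u * ε)) :=
          Finset.sum_le_sum fun j _ => by linarith [(abs_le.mp (hgg (Z j ω))).1]
        rw [Finset.sum_add_distrib, Finset.sum_const, hcard, nsmul_eq_mul] at h1
        have hnne : (n : ℝ) ≠ 0 := by positivity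
        have h2 := mul_le_mul_of_nonneg_left h1 (by positivity : (0:ℝ) ≤ (n : ℝ)⁻¹)
        rw [mul_add, inv_mul_cancel_left₀ hnne] at h2
        linarith
      have hsm : Real.sqrt (m + ε) ≤ (7/4) * Real.sqrt (a + ε) := by
        have h1 : m + ε ≤ (49/16) * (a + ε) := by nlinarith
        calc Real.sqrt (m + ε) ≤ Real.sqrt ((49/16) * (a + ε)) := Real.sqrt_le_sqrt h1
          _ = (7/4) * Real.sqrt (a + ε) := by
              rw [show (49/16 : ℝ) * (a + ε) = (7/4)^2 * (a + ε) by norm_num,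
                Real.sqrt_mul (by positivity), Real.sqrt_sq (by norm_num)]
      refine Set.mem_iUnion.mpr ⟨i, hH, ?_⟩
      have hfac : u * Real.sqrt ε * Real.sqrt ε = u * ε := by
        rw [mul_assoc, Real.mul_self_sqrt hε.le]
      have hprod : u * ε ≤ u * Real.sqrt ε * Real.sqrt (a + ε) := by
        rw [← hfac]
        exact mul_le_mul_of_nonneg_left hsε (by positivity)
      have h1 : u * Real.sqrt ε * Real.sqrt (m + ε) ≤
          (7/4) * (u * Real.sqrt ε * Real.sqrt (a + ε)) := by
        have := mul_le_mul_of_nonneg_left hsm (show (0:ℝ) ≤ u * Real.sqrt ε by positivity)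
        linarith
      nlinarith [hd0, ham, hScmp, hprod, h1]
    have hEb : ∀ i : Fin k₀, P (Ev i) ≤ ENNReal.ofReal (C * B) := by
      intro i
      by_cases hH : Hyp i
      · obtain ⟨hgiG, -, -⟩ := hrepspec i hH
        exact le_trans (measure_mono (fun ω hω => hω.2)) (hcenter (rep i) hgiG)
      · calc P (Ev i) ≤ P (∅ : Set Ω) := measure_mono (fun ω hω => (hH hω.1).elim)
          _ = 0 := measure_empty
          _ ≤ _ := zero_le
    calc P _ ≤ P (⋃ i, Ev i) := measure_mono hsub
      _ ≤ ∑ i, P (Ev i) := measure_iUnion_fintype_le _ _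
      _ ≤ ∑ _i : Fin k₀, ENNReal.ofReal (C * B) := Finset.sum_le_sum fun i _ => hEb i
      _ = (k₀ : ℝ≥0∞) * ENNReal.ofReal (C * B) := by
          rw [Finset.sum_const, Finset.card_univ, Fintype.card_fin, nsmul_eq_mul]
      _ ≤ ENNReal.ofReal (C + 1) * (coveringNumber G (u * ε) : ℝ≥0∞) * ENNReal.ofReal B := by
          rw [ENNReal.ofReal_mul hC.le]
          calc (k₀ : ℝ≥0∞) * (ENNReal.ofReal C * ENNReal.ofReal B)
              = ENNReal.ofReal C * (k₀ : ℝ≥0∞) * ENNReal.ofReal B := by ring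
            _ ≤ _ := by
                gcongr
                · linarith
end

section
/- Let H be a class of measurable functions from X to ℝ containing a risk minimizer h_H = argmin_{h∈H} R(h), and let ĥ = argmin_{h∈H} (1/n)Σ_{i=1}^n ℓ(h(X_i),Y_i) be the empirical risk minimizer over H. Then E[R(ĥ) − R(h*)] ≤ E_{D_n}[ (1/n)Σ_{i=1}^n ( E_{D'_n}[g(ĥ,Z'_i)] − 2 g(ĥ,Z_i) ) ] + 2 (R(h_H) − R(h*)). -/
open MeasureTheory Real
open scoped BigOperators Classical ENNReal NNReal

theorem stmt6
    {Ω : Type*} [MeasurableSpace Ω] (P : Measure Ω) [IsProbabilityMeasure P]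
    (d : ℕ) (hd : 0 < d)
    (Z : ℤ → Ω → (Fin d → ℝ) × ℝ) (hZmeas : ∀ t, Measurable (Z t))
    (Xset : Set (Fin d → ℝ)) (Yset : Set ℝ)
    (hZmem : ∀ t ω, (Z t ω).1 ∈ Xset ∧ (Z t ω).2 ∈ Yset)
    (T : Ω → Ω) (hT : Ergodic T P) (hTZ : ∀ t ω, Z (t + 1) ω = Z t (T ω))
    (ℓ : ℝ → ℝ → ℝ) (hℓmeas : Measurable fun p : ℝ × ℝ => ℓ p.1 p.2)
    (hℓnonneg : ∀ u y, 0 ≤ ℓ u y)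
    (hstar : (Fin d → ℝ) → ℝ) (hstarMeas : Measurable hstar)
    (hstarMem : ∀ x ∈ Xset, hstar x ∈ Yset)
    (hstarMin : ∀ h : (Fin d → ℝ) → ℝ, Measurable h → (∀ x ∈ Xset, h x ∈ Yset) →
      risk P Z ℓ hstar ≤ risk P Z ℓ h)
    {Ω' : Type*} [MeasurableSpace Ω'] (P' : Measure Ω') [IsProbabilityMeasure P']
    (Z' : ℤ → Ω' → (Fin d → ℝ) × ℝ) (hZ'meas : ∀ t, Measurable (Z' t))
    (hstat : ∀ t : ℤ, Measure.map (Z t) P = Measure.map (Z 0) P)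
    (hcopy : ∀ t : ℤ, Measure.map (Z' t) P' = Measure.map (Z 0) P)
    (n : ℕ) (hn : 0 < n)
    (H : Set ((Fin d → ℝ) → ℝ)) (hH : ∀ h ∈ H, Measurable h)
    (hH₀ : (Fin d → ℝ) → ℝ) (hH₀mem : hH₀ ∈ H)
    (hH₀min : ∀ h ∈ H, risk P Z ℓ hH₀ ≤ risk P Z ℓ h)
    (hhat : Ω → (Fin d → ℝ) → ℝ)
    (hhatERM : ∀ ω, hhat ω ∈ H ∧ ∀ h ∈ H, empRisk Z ℓ n (hhat ω) ω ≤ empRisk Z ℓ n h ω)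
    (hInt1 : Integrable (fun ω => risk P Z ℓ (hhat ω)) P)
    (hInt2 : Integrable (fun ω => (n : ℝ)⁻¹ * ∑ i ∈ Finset.Icc 1 n,
      ((∫ ω', lossDiff ℓ hstar (hhat ω) (Z' i ω') ∂P') -
        2 * lossDiff ℓ hstar (hhat ω) (Z i ω))) P)
    (hInt3 : ∀ h ∈ H, ∀ i ∈ Finset.Icc 1 n,
      Integrable (fun ω => ℓ (h (Z i ω).1) (Z i ω).2) P)
    (hInt4 : ∀ i ∈ Finset.Icc 1 n, Integrable (fun ω => ℓ (hstar (Z i ω).1) (Z i ω).2) P)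
    (hInt5 : ∀ ω, ∀ i ∈ Finset.Icc 1 n,
      Integrable (fun ω' => ℓ ((hhat ω) (Z' i ω').1) (Z' i ω').2) P')
    (hInt6 : ∀ i ∈ Finset.Icc 1 n,
      Integrable (fun ω' => ℓ (hstar (Z' i ω').1) (Z' i ω').2) P') :
    (∫ ω, risk P Z ℓ (hhat ω) ∂P) - risk P Z ℓ hstar ≤
      (∫ ω, (n : ℝ)⁻¹ * ∑ i ∈ Finset.Icc 1 n,
        ((∫ ω', lossDiff ℓ hstar (hhat ω) (Z' i ω') ∂P') -
          2 * lossDiff ℓ hstar (hhat ω) (Z i ω)) ∂P) +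
      2 * (risk P Z ℓ hH₀ - risk P Z ℓ hstar) := by
  classical
  have hcard : (Finset.Icc 1 n).card = n := by
    rw [Nat.card_Icc]; omega
  have hmeas_hat : ∀ ω, Measurable (hhat ω) := fun ω => hH _ (hhatERM ω).1
  have hfmeas : ∀ h : (Fin d → ℝ) → ℝ, Measurable h →
      Measurable (fun z : (Fin d → ℝ) × ℝ => ℓ (h z.1) z.2) := fun h hm =>
    hℓmeas.comp ((hm.comp measurable_fst).prodMk measurable_snd)
  -- expectation over the independent copy equals the risk
  have hriskP' : ∀ (h : (Fin d → ℝ) → ℝ), Measurable h → ∀ i : ℤ,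
      (∫ ω', ℓ (h (Z' i ω').1) (Z' i ω').2 ∂P') = risk P Z ℓ h := by
    intro h hm i
    have hf := hfmeas h hm
    have h1 : (∫ ω', ℓ (h (Z' i ω').1) (Z' i ω').2 ∂P')
        = ∫ z, ℓ (h z.1) z.2 ∂(Measure.map (Z' i) P') := by
      rw [integral_map (hZ'meas i).aemeasurable hf.aestronglyMeasurable]
    rw [h1, hcopy i, integral_map (hZmeas 0).aemeasurable hf.aestronglyMeasurable]
    rfl
  -- stationarity: expectation at time i equals the risk
  have hriskP : ∀ (h : (Fin d → ℝ) → ℝ), Measurable h → ∀ i : ℤ,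
      (∫ ω, ℓ (h (Z i ω).1) (Z i ω).2 ∂P) = risk P Z ℓ h := by
    intro h hm i
    have hf := hfmeas h hm
    have h1 : (∫ ω, ℓ (h (Z i ω).1) (Z i ω).2 ∂P)
        = ∫ z, ℓ (h z.1) z.2 ∂(Measure.map (Z i) P) := by
      rw [integral_map (hZmeas i).aemeasurable hf.aestronglyMeasurable]
    rw [h1, hstat i, integral_map (hZmeas 0).aemeasurable hf.aestronglyMeasurable]
    rfl
  -- value of the inner integral
  have hinner : ∀ ω, ∀ i ∈ Finset.Icc 1 n,
      (∫ ω', lossDiff ℓ hstar (hhat ω) (Z' i ω') ∂P')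
        = risk P Z ℓ (hhat ω) - risk P Z ℓ hstar := by
    intro ω i hi
    simp only [lossDiff]
    rw [integral_sub (hInt5 ω i hi) (hInt6 i hi),
      hriskP' _ (hmeas_hat ω) i, hriskP' hstar hstarMeas i]
  -- pointwise identity for the integrand
  have hkey : ∀ ω,
      (n : ℝ)⁻¹ * ∑ i ∈ Finset.Icc 1 n,
        ((∫ ω', lossDiff ℓ hstar (hhat ω) (Z' i ω') ∂P') -
          2 * lossDiff ℓ hstar (hhat ω) (Z i ω))
      = (risk P Z ℓ (hhat ω) - risk P Z ℓ hstar)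
        - 2 * (empRisk Z ℓ n (hhat ω) ω - empRisk Z ℓ n hstar ω) := by
    intro ω
    have hsum1 : ∑ i ∈ Finset.Icc 1 n,
        (∫ ω', lossDiff ℓ hstar (hhat ω) (Z' i ω') ∂P')
        = (n : ℝ) * (risk P Z ℓ (hhat ω) - risk P Z ℓ hstar) := by
      rw [Finset.sum_congr rfl (fun i hi => hinner ω i hi), Finset.sum_const, hcard,
        nsmul_eq_mul]
    have hsum2 : ∑ i ∈ Finset.Icc 1 n, lossDiff ℓ hstar (hhat ω) (Z i ω)
        = (∑ i ∈ Finset.Icc 1 n, ℓ ((hhat ω) (Z i ω).1) (Z i ω).2)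
          - ∑ i ∈ Finset.Icc 1 n, ℓ (hstar (Z i ω).1) (Z i ω).2 := by
      simp [lossDiff, Finset.sum_sub_distrib]
    have hne : (n : ℝ) ≠ 0 := Nat.cast_ne_zero.mpr hn.ne'
    rw [Finset.sum_sub_distrib, hsum1, ← Finset.mul_sum, hsum2]
    simp only [empRisk]
    field_simp
  -- the lower bound function and its integrability
  have hERM : ∀ ω, empRisk Z ℓ n (hhat ω) ω ≤ empRisk Z ℓ n hH₀ ω :=
    fun ω => (hhatERM ω).2 hH₀ hH₀mem
  have hle : ∀ ω,
      (risk P Z ℓ (hhat ω) - risk P Z ℓ hstar)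
        - 2 * (empRisk Z ℓ n hH₀ ω - empRisk Z ℓ n hstar ω)
      ≤ (n : ℝ)⁻¹ * ∑ i ∈ Finset.Icc 1 n,
        ((∫ ω', lossDiff ℓ hstar (hhat ω) (Z' i ω') ∂P') -
          2 * lossDiff ℓ hstar (hhat ω) (Z i ω)) := by
    intro ω
    rw [hkey ω]
    have := hERM ω
    linarith
  have hEH : Integrable (fun ω => empRisk Z ℓ n hH₀ ω) P := by
    simp only [empRisk]
    exact (integrable_finset_sum _ (fun i hi => hInt3 hH₀ hH₀mem i hi)).const_mul _
  have hES : Integrable (fun ω => empRisk Z ℓ n hstar ω) P := by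
    simp only [empRisk]
    exact (integrable_finset_sum _ (fun i hi => hInt4 i hi)).const_mul _
  have hIntLB : Integrable (fun ω =>
      (risk P Z ℓ (hhat ω) - risk P Z ℓ hstar)
        - 2 * (empRisk Z ℓ n hH₀ ω - empRisk Z ℓ n hstar ω)) P :=
    ((hInt1.sub (integrable_const _)).sub (((hEH.sub hES)).const_mul 2))
  have hmono := integral_mono hIntLB hInt2 hle
  -- compute the integral of the lower bound
  have hintEH : ∫ ω, empRisk Z ℓ n hH₀ ω ∂P = risk P Z ℓ hH₀ := by
    simp only [empRisk]
    rw [integral_const_mul, integral_finset_sum _ (fun i hi => hInt3 hH₀ hH₀mem i hi)]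
    have e := hriskP hH₀ (hH hH₀ hH₀mem)
    simp only [e, Finset.sum_const, hcard, nsmul_eq_mul]
    have hne : (n : ℝ) ≠ 0 := Nat.cast_ne_zero.mpr hn.ne'
    field_simp
  have hintES : ∫ ω, empRisk Z ℓ n hstar ω ∂P = risk P Z ℓ hstar := by
    simp only [empRisk]
    rw [integral_const_mul, integral_finset_sum _ (fun i hi => hInt4 i hi)]
    have e := hriskP hstar hstarMeas
    simp only [e, Finset.sum_const, hcard, nsmul_eq_mul]
    have hne : (n : ℝ) ≠ 0 := Nat.cast_ne_zero.mpr hn.ne'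
    field_simp
  have hintLB : ∫ ω, ((risk P Z ℓ (hhat ω) - risk P Z ℓ hstar)
        - 2 * (empRisk Z ℓ n hH₀ ω - empRisk Z ℓ n hstar ω)) ∂P
      = (∫ ω, risk P Z ℓ (hhat ω) ∂P) - risk P Z ℓ hstar
        - 2 * (risk P Z ℓ hH₀ - risk P Z ℓ hstar) := by
    have hA : Integrable (fun ω => risk P Z ℓ (hhat ω) - risk P Z ℓ hstar) P :=
      hInt1.sub (integrable_const _)
    have hC : Integrable (fun ω => empRisk Z ℓ n hH₀ ω - empRisk Z ℓ n hstar ω) P :=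
      hEH.sub hES
    have hD : Integrable (fun ω =>
        2 * (empRisk Z ℓ n hH₀ ω - empRisk Z ℓ n hstar ω)) P := hC.const_mul 2
    rw [integral_sub hA hD, integral_sub hInt1 (integrable_const _), integral_const,
      integral_const_mul, integral_sub hEH hES, hintEH, hintES]
    simp [measure_univ]
  rw [hintLB] at hmono
  linarith
end

section
/- Assume (A4) and let M > 0. Let h_1,…,h_m be measurable functions from X to ℝ such that for each j the function g_j(z) = ℓ(h_j(x),y) − ℓ(h*(x),y) satisfies |g_j(Z_1)| ≤ M almost surely, E[g_j(Z_1)] ≥ 0 and E[g_j(Z_1)²] ≤ M · E[g_j(Z_1)], and let j* be any random index with values in {1,…,m}. Then there exists a constant C' > 0 depending only on c_γ, c_A and M such that for all ε > 0 and all n ≥ n_0: P{ E[g_{j*}(Z_1)] − (2/n)Σ_{i=1}^n g_{j*}(Z_i) > ε } ≤ m · C exp(−ε φ(n)/C'), where in the probability E[g_{j*}(Z_1)] denotes the expectation evaluated at the (random) index j*. -/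
open MeasureTheory Real
open scoped BigOperators Classical ENNReal NNReal

theorem stmt9
    {Ω : Type*} [MeasurableSpace Ω] (P : Measure Ω) [IsProbabilityMeasure P]
    (d : ℕ) (hd : 0 < d)
    (Z : ℤ → Ω → (Fin d → ℝ) × ℝ) (hZmeas : ∀ t, Measurable (Z t))
    (Xset : Set (Fin d → ℝ)) (Yset : Set ℝ)
    (hZmem : ∀ t ω, (Z t ω).1 ∈ Xset ∧ (Z t ω).2 ∈ Yset)
    (T : Ω → Ω) (hT : Ergodic T P) (hTZ : ∀ t ω, Z (t + 1) ω = Z t (T ω))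
    (ℓ : ℝ → ℝ → ℝ) (hℓmeas : Measurable fun p : ℝ × ℝ => ℓ p.1 p.2)
    (hℓnonneg : ∀ u y, 0 ≤ ℓ u y)
    (hstar : (Fin d → ℝ) → ℝ) (hstarMeas : Measurable hstar)
    (hstarMem : ∀ x ∈ Xset, hstar x ∈ Yset)
    (hstarMin : ∀ h : (Fin d → ℝ) → ℝ, Measurable h → (∀ x ∈ Xset, h x ∈ Yset) →
      risk P Z ℓ hstar ≤ risk P Z ℓ h)
    (φ : ℕ → ℕ) (hφmono : Monotone φ) (hφle : ∀ n, φ n ≤ n) (hφpos : ∀ n, 1 ≤ φ n)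
    (C cγ cA : ℝ) (hC : 0 < C) (hcγ : 0 < cγ) (hcA : 0 < cA)
    (n₀ : ℕ) (hn₀ : 1 ≤ n₀)
    (hA4 : ∀ (g : (Fin d → ℝ) × ℝ → ℝ) (γ A : ℝ), 0 ≤ γ → 0 < A → Measurable g →
      (∀ z, |g z| ≤ A) → (∫ ω, g (Z 1 ω) ∂P) = 0 → (∫ ω, g (Z 1 ω) ^ 2 ∂P) ≤ γ ^ 2 →
      ∀ ε : ℝ, 0 < ε → ∀ n : ℕ, n₀ ≤ n →
        (P {ω | ε ≤ (n : ℝ)⁻¹ * ∑ i ∈ Finset.Icc 1 n, g (Z i ω)}).toReal ≤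
          C * Real.exp (-(ε ^ 2 * (φ n : ℝ)) / (cγ * γ ^ 2 + cA * ε * A)))
    (M : ℝ) (hM : 0 < M) :
    ∃ C' : ℝ, 0 < C' ∧ ∀ (m : ℕ) (hj : Fin m → (Fin d → ℝ) → ℝ),
      (∀ j, Measurable (hj j)) →
      (∀ j, ∀ᵐ ω ∂P, |lossDiff ℓ hstar (hj j) (Z 1 ω)| ≤ M) →
      (∀ j, 0 ≤ (∫ ω, lossDiff ℓ hstar (hj j) (Z 1 ω) ∂P)) →
      (∀ j, (∫ ω, lossDiff ℓ hstar (hj j) (Z 1 ω) ^ 2 ∂P) ≤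
        M * ∫ ω, lossDiff ℓ hstar (hj j) (Z 1 ω) ∂P) →
      ∀ jstar : Ω → Fin m, ∀ ε : ℝ, 0 < ε → ∀ n : ℕ, n₀ ≤ n →
        (P {ω | (∫ ω', lossDiff ℓ hstar (hj (jstar ω)) (Z 1 ω') ∂P) -
            2 * ((n : ℝ)⁻¹ * ∑ i ∈ Finset.Icc 1 n,
              lossDiff ℓ hstar (hj (jstar ω)) (Z i ω)) > ε}).toReal ≤
          (m : ℝ) * C * Real.exp (-(ε * (φ n : ℝ)) / C') := by
    classical
  have hC' : (0:ℝ) < 4 * M * (cγ + cA) := by positivity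
  refine ⟨4 * M * (cγ + cA), hC', ?_⟩
  intro m hj hjm habs hpos hvar jstar ε hε n hn
  have hn1 : 1 ≤ n := le_trans hn₀ hn
  have hnR : (n : ℝ) ≠ 0 := by positivity
  -- the clamped loss differences
  set g : Fin m → ((Fin d → ℝ) × ℝ) → ℝ :=
    fun j z => max (-M) (min M (lossDiff ℓ hstar (hj j) z)) with hgdef
  have hLmeas : ∀ j : Fin m, Measurable (lossDiff ℓ hstar (hj j)) := by
    intro j
    exact (hℓmeas.comp (((hjm j).comp measurable_fst).prodMk measurable_snd)).sub
      (hℓmeas.comp ((hstarMeas.comp measurable_fst).prodMk measurable_snd))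
  have hgmeas : ∀ j, Measurable (g j) := fun j =>
    measurable_const.max (measurable_const.min (hLmeas j))
  have hgbdd : ∀ j z, |g j z| ≤ M := by
    intro j z
    rw [abs_le]
    refine ⟨le_max_left _ _, max_le (by linarith) (min_le_left _ _)⟩
  set E : Fin m → ℝ := fun j => ∫ ω, lossDiff ℓ hstar (hj j) (Z 1 ω) ∂P with hEdef
  have hE0 : ∀ j, 0 ≤ E j := fun j => hpos j
  -- a.e. equality with the clamped version at time 1
  have haeq1 : ∀ j, ∀ᵐ ω ∂P, g j (Z 1 ω) = lossDiff ℓ hstar (hj j) (Z 1 ω) := by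
    intro j
    filter_upwards [habs j] with ω h
    have h1 := abs_le.1 h
    simp only [hgdef]
    rw [min_eq_right h1.2, max_eq_right h1.1]
  -- iterates of T
  have hZiter : ∀ k : ℕ, ∀ ω, Z (1 + (k : ℤ)) ω = Z 1 (T^[k] ω) := by
    intro k
    induction k with
    | zero => intro ω; simp
    | succ k ih =>
      intro ω
      have h1 : (1 + ((k : ℕ) + 1 : ℕ) : ℤ) = (1 + (k : ℤ)) + 1 := by push_cast; ring
      rw [h1, hTZ, ih, Function.iterate_succ_apply]
  have haeqi : ∀ j, ∀ i : ℕ, 1 ≤ i →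
      ∀ᵐ ω ∂P, g j (Z i ω) = lossDiff ℓ hstar (hj j) (Z i ω) := by
    intro j i hi
    obtain ⟨k, rfl⟩ := Nat.exists_eq_add_of_le hi
    have hmp : MeasurePreserving (T^[k]) P P := hT.toMeasurePreserving.iterate k
    have hms : MeasurableSet {ω | g j (Z 1 ω) = lossDiff ℓ hstar (hj j) (Z 1 ω)} :=
      measurableSet_eq_fun ((hgmeas j).comp (hZmeas 1)) ((hLmeas j).comp (hZmeas 1))
    have h1 : ∀ᵐ ω ∂(P.map (T^[k])),
        g j (Z 1 ω) = lossDiff ℓ hstar (hj j) (Z 1 ω) := by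
      rw [hmp.map_eq]; exact haeq1 j
    have h2 := (ae_map_iff hmp.aemeasurable hms).1 h1
    filter_upwards [h2] with ω h
    have h3 : ((1 + k : ℕ) : ℤ) = 1 + (k : ℤ) := by push_cast; ring
    rw [h3, hZiter k ω]
    exact h
  -- integrability
  have hint : ∀ j, Integrable (fun ω => g j (Z 1 ω)) P := by
    intro j
    refine ⟨((hgmeas j).comp (hZmeas 1)).aestronglyMeasurable, ?_⟩
    refine HasFiniteIntegral.of_bounded (C := M) (ae_of_all _ fun ω => ?_)
    simpa [Real.norm_eq_abs] using hgbdd j (Z 1 ω)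
  have hint2 : ∀ j, Integrable (fun ω => g j (Z 1 ω) ^ 2) P := by
    intro j
    refine ⟨(((hgmeas j).comp (hZmeas 1)).pow measurable_const).aestronglyMeasurable, ?_⟩
    refine HasFiniteIntegral.of_bounded (C := M ^ 2) (ae_of_all _ fun ω => ?_)
    rw [Real.norm_eq_abs, abs_pow]
    exact pow_le_pow_left₀ (abs_nonneg _) (hgbdd j (Z 1 ω)) 2
  have hEeq : ∀ j, (∫ ω, g j (Z 1 ω) ∂P) = E j := by
    intro j
    rw [hEdef]
    exact integral_congr_ae (haeq1 j)
  have hEabs : ∀ j, |E j| ≤ M := by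
    intro j
    rw [← hEeq j]
    have h1 := norm_integral_le_of_norm_le_const (μ := P)
      (f := fun ω => g j (Z 1 ω)) (C := M)
      (ae_of_all _ fun ω => by simpa [Real.norm_eq_abs] using hgbdd j (Z 1 ω))
    rw [Real.norm_eq_abs] at h1
    simpa using h1
  have hgsqeq : ∀ j, (∫ ω, g j (Z 1 ω) ^ 2 ∂P)
      = ∫ ω, lossDiff ℓ hstar (hj j) (Z 1 ω) ^ 2 ∂P := by
    intro j
    refine integral_congr_ae ?_
    filter_upwards [haeq1 j] with ω h
    rw [h]
  -- the per-index deviation bound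
  set Tset : Fin m → Set Ω := fun j =>
    {ω | (ε + E j) / 2 ≤ (n : ℝ)⁻¹ * ∑ i ∈ Finset.Icc 1 n, (E j - g j (Z i ω))} with hTdef
  have key : ∀ j : Fin m, (P (Tset j)).toReal ≤
      C * Real.exp (-(ε * (φ n : ℝ)) / (4 * M * (cγ + cA))) := by
    intro j
    have hε'pos : 0 < (ε + E j) / 2 := by have := hE0 j; linarith
    have hMEnn : 0 ≤ M * E j := mul_nonneg hM.le (hE0 j)
    have hbound : ∀ z, |E j - g j z| ≤ 2 * M := by
      intro z
      have h1 := hEabs j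
      have h2 := hgbdd j z
      rw [abs_le] at h1 h2 ⊢
      constructor <;> linarith [h1.1, h1.2, h2.1, h2.2]
    have hint0 : (∫ ω, (E j - g j (Z 1 ω)) ∂P) = 0 := by
      rw [integral_sub (integrable_const _) (hint j), integral_const, hEeq j]
      simp
    have hintsq : (∫ ω, (E j - g j (Z 1 ω)) ^ 2 ∂P) ≤ Real.sqrt (M * E j) ^ 2 := by
      rw [Real.sq_sqrt hMEnn]
      have hexp : ∀ ω : Ω, (E j - g j (Z 1 ω)) ^ 2
          = (g j (Z 1 ω) ^ 2 - (2 * E j) * g j (Z 1 ω)) + E j ^ 2 := by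
        intro ω; ring
      have hIsub : Integrable
          (fun ω => g j (Z 1 ω) ^ 2 - (2 * E j) * g j (Z 1 ω)) P :=
        (hint2 j).sub ((hint j).const_mul _)
      have hI1 : (∫ ω, (g j (Z 1 ω) ^ 2 - (2 * E j) * g j (Z 1 ω)) ∂P)
          = (∫ ω, g j (Z 1 ω) ^ 2 ∂P) - (2 * E j) * E j := by
        rw [integral_sub (hint2 j) ((hint j).const_mul _), integral_const_mul, hEeq j]
      have hcomp : (∫ ω, (E j - g j (Z 1 ω)) ^ 2 ∂P)
          = (∫ ω, g j (Z 1 ω) ^ 2 ∂P) - (2 * E j) * E j + E j ^ 2 := by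
        simp only [hexp]
        rw [integral_add hIsub (integrable_const _), hI1, integral_const]
        simp
      rw [hcomp, hgsqeq j]
      have hv := hvar j
      rw [show (∫ ω, lossDiff ℓ hstar (hj j) (Z 1 ω) ∂P) = E j from rfl] at hv
      nlinarith [sq_nonneg (E j)]
    have happ := hA4 (fun z => E j - g j z) (Real.sqrt (M * E j)) (2 * M)
      (Real.sqrt_nonneg _) (by positivity) (measurable_const.sub (hgmeas j))
      hbound hint0 hintsq ((ε + E j) / 2) hε'pos n hn
    refine le_trans happ ?_
    have hD1 : 0 ≤ cγ * Real.sqrt (M * E j) ^ 2 :=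
      mul_nonneg hcγ.le (sq_nonneg _)
    have hD2 : 0 < cA * ((ε + E j) / 2) * (2 * M) := by
      apply mul_pos (mul_pos hcA hε'pos); linarith
    have hDpos : 0 < cγ * Real.sqrt (M * E j) ^ 2 + cA * ((ε + E j) / 2) * (2 * M) := by
      linarith
    refine mul_le_mul_of_nonneg_left (Real.exp_le_exp.2 ?_) hC.le
    rw [Real.sq_sqrt hMEnn] at hDpos ⊢
    rw [neg_div, neg_div, neg_le_neg_iff, div_le_div_iff₀ hC' hDpos]
    have hφnn : (0:ℝ) ≤ (φ n : ℝ) := Nat.cast_nonneg _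
    have hεle : ε ≤ 2 * ((ε + E j) / 2) := by have := hE0 j; linarith
    have hEle : E j ≤ 2 * ((ε + E j) / 2) := by linarith
    have hp1 : cγ * M * (ε * E j)
        ≤ cγ * M * ((2 * ((ε + E j) / 2)) * (2 * ((ε + E j) / 2))) := by
      refine mul_le_mul_of_nonneg_left ?_ (mul_nonneg hcγ.le hM.le)
      exact mul_le_mul hεle hEle (hE0 j) (by linarith)
    have hp2 : cA * M * (ε * ((ε + E j) / 2))
        ≤ cA * M * ((2 * ((ε + E j) / 2)) * ((ε + E j) / 2)) := by
      refine mul_le_mul_of_nonneg_left ?_ (mul_nonneg hcA.le hM.le)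
      exact mul_le_mul_of_nonneg_right hεle hε'pos.le
    have hbase : ε * (cγ * (M * E j) + cA * ((ε + E j) / 2) * (2 * M))
        ≤ ((ε + E j) / 2) ^ 2 * (4 * M * (cγ + cA)) := by nlinarith [hp1, hp2]
    nlinarith [mul_le_mul_of_nonneg_right hbase hφnn]
  -- the good event
  set Good : Set Ω :=
    {ω | ∀ j : Fin m, ∀ i ∈ Finset.Icc 1 n,
      lossDiff ℓ hstar (hj j) (Z i ω) = g j (Z i ω)} with hGdef
  have hGood : ∀ᵐ ω ∂P, ω ∈ Good := by
    rw [hGdef]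
    refine (ae_all_iff).2 fun j => (ae_all_iff).2 fun i => ?_
    by_cases hi : i ∈ Finset.Icc 1 n
    · filter_upwards [haeqi j i (Finset.mem_Icc.1 hi).1] with ω h _
      exact h.symm
    · exact ae_of_all _ fun ω h => absurd h hi
  have hGoodc : P Goodᶜ = 0 := ae_iff.mp hGood
  -- inclusion
  have hsub : {ω | (∫ ω', lossDiff ℓ hstar (hj (jstar ω)) (Z 1 ω') ∂P) -
      2 * ((n : ℝ)⁻¹ * ∑ i ∈ Finset.Icc 1 n,
        lossDiff ℓ hstar (hj (jstar ω)) (Z i ω)) > ε}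
      ⊆ (⋃ j, Tset j) ∪ Goodᶜ := by
    intro ω hω
    by_cases hg : ω ∈ Good
    · left
      refine Set.mem_iUnion.2 ⟨jstar ω, ?_⟩
      have hω' : E (jstar ω) - 2 * ((n : ℝ)⁻¹ * ∑ i ∈ Finset.Icc 1 n,
          lossDiff ℓ hstar (hj (jstar ω)) (Z i ω)) > ε := hω
      have hsum : ∑ i ∈ Finset.Icc 1 n, lossDiff ℓ hstar (hj (jstar ω)) (Z i ω)
          = ∑ i ∈ Finset.Icc 1 n, g (jstar ω) (Z i ω) :=
        Finset.sum_congr rfl fun i hi => hg (jstar ω) i hi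
      have hcard : (Finset.Icc 1 n).card = n := by rw [Nat.card_Icc]; omega
      have hsum2 : (n : ℝ)⁻¹ * ∑ i ∈ Finset.Icc 1 n, (E (jstar ω) - g (jstar ω) (Z i ω))
          = E (jstar ω) - (n : ℝ)⁻¹ * ∑ i ∈ Finset.Icc 1 n, g (jstar ω) (Z i ω) := by
        rw [Finset.sum_sub_distrib, Finset.sum_const, hcard, nsmul_eq_mul, mul_sub,
          inv_mul_cancel_left₀ hnR]
      show (ε + E (jstar ω)) / 2 ≤ (n : ℝ)⁻¹ *
          ∑ i ∈ Finset.Icc 1 n, (E (jstar ω) - g (jstar ω) (Z i ω))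
      rw [hsum2, ← hsum]
      linarith
    · right; exact hg
  -- putting things together
  have hmeasle : P {ω | (∫ ω', lossDiff ℓ hstar (hj (jstar ω)) (Z 1 ω') ∂P) -
      2 * ((n : ℝ)⁻¹ * ∑ i ∈ Finset.Icc 1 n,
        lossDiff ℓ hstar (hj (jstar ω)) (Z i ω)) > ε} ≤ ∑ j, P (Tset j) := by
    calc P _ ≤ P ((⋃ j, Tset j) ∪ Goodᶜ) := measure_mono hsub
      _ ≤ P (⋃ j, Tset j) + P Goodᶜ := measure_union_le _ _
      _ = P (⋃ j, Tset j) := by rw [hGoodc, add_zero]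
      _ ≤ ∑' j, P (Tset j) := measure_iUnion_le _
      _ = ∑ j, P (Tset j) := tsum_fintype _
  have hsumfin : (∑ j, P (Tset j)) ≠ ∞ :=
    ENNReal.sum_ne_top.2 fun j _ => measure_ne_top P _
  calc (P _).toReal ≤ (∑ j, P (Tset j)).toReal := ENNReal.toReal_mono hsumfin hmeasle
    _ = ∑ j, (P (Tset j)).toReal := ENNReal.toReal_sum fun j _ => measure_ne_top P _
    _ ≤ ∑ _j : Fin m, C * Real.exp (-(ε * (φ n : ℝ)) / (4 * M * (cγ + cA))) :=
        Finset.sum_le_sum fun j _ => key j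
    _ = (m : ℝ) * C * Real.exp (-(ε * (φ n : ℝ)) / (4 * M * (cγ + cA))) := by
        rw [Finset.sum_const, Finset.card_univ, Fintype.card_fin, nsmul_eq_mul, ← mul_assoc]
end
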